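/- Let {B(x_i, r_i)}_{i=1}^∞ be a countable collection of closed Euclidean balls in ℝ^d that is shrinking locally and such that Lebesgue-almost every point of ℝ^d lies in limsup B(x_i, r_i). Fix N, M ∈ ℕ with M ≥ 1 and set B(N,M) = {α ∈ ℝ^d : α ∉ B(x_i, r_i/M) for all i ≥ N}. Then for every y ∈ B(N,M), limsup_{r→0} L^d(B(y,r) ∩ B(N,M)) / L^d(B(y,r)) ≤ 1 − (1/(3M))^d. -/

import Mathlib

open MeasureTheory Metric Set Filter ENNReal Topology

/-- For a shrinking-locally countable collection of closed Euclidean balls in `ℝ^d`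
whose limsup set has full Lebesgue measure, fix `N, M ∈ ℕ` with `M ≥ 1` and let
`B(N,M) = {α | ∀ i ≥ N, α ∉ B(x i, r i / M)}`. Then at every point `y ∈ B(N,M)` the upper
density of `B(N,M)` is at most `1 - (1/(3M))^d`. -/
theorem density_BNM_le (d : ℕ)
    (x : ℕ → EuclideanSpace ℝ (Fin d)) (r : ℕ → ℝ) (hr : ∀ i, 0 < r i)
    (hshrink : ∀ (y : EuclideanSpace ℝ (Fin d)) (ρ : ℝ), 0 < ρ → ∀ ε > (0 : ℝ),
      {i : ℕ | (closedBall (x i) (r i) ∩ closedBall y ρ).Nonempty ∧ ε < r i}.Finite)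
    (hae : ∀ᵐ α : EuclideanSpace ℝ (Fin d), ∀ n : ℕ, ∃ i ≥ n, α ∈ closedBall (x i) (r i))
    (N M : ℕ) (hM : 1 ≤ M)
    (y : EuclideanSpace ℝ (Fin d))
    (hy : y ∈ {α : EuclideanSpace ℝ (Fin d) | ∀ i ≥ N, α ∉ closedBall (x i) (r i / M)}) :
    Filter.limsup
        (fun ρ : ℝ => volume (closedBall y ρ ∩
            {α : EuclideanSpace ℝ (Fin d) | ∀ i ≥ N, α ∉ closedBall (x i) (r i / M)}) /
          volume (closedBall y ρ))
        (nhdsWithin 0 (Set.Ioi 0)) ≤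
      1 - (1 / (3 * (M : ℝ≥0∞))) ^ d := by
  set S := {α : EuclideanSpace ℝ (Fin d) | ∀ i ≥ N, α ∉ closedBall (x i) (r i / M)} with hS
  have hMR : (0 : ℝ) < M := by exact_mod_cast Nat.lt_of_lt_of_le Nat.zero_lt_one hM
  have hM1R : (1 : ℝ) ≤ M := by exact_mod_cast hM
  set κ := volume (closedBall (0 : EuclideanSpace ℝ (Fin d)) 1) with hκ
  have hvol : ∀ (z : EuclideanSpace ℝ (Fin d)) (a : ℝ), 0 ≤ a →
      volume (closedBall z a) = ENNReal.ofReal (a ^ d) * κ := by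
    intro z a ha
    rw [Measure.addHaar_closedBall' volume z ha, finrank_euclideanSpace_fin]
  have key : ∀ ρ : ℝ, 0 < ρ →
      volume (closedBall y ρ ∩ S) / volume (closedBall y ρ) ≤
        1 - (1 / (3 * (M : ℝ≥0∞))) ^ d := by
    intro ρ hρ
    have hB0 : volume (closedBall y ρ) ≠ 0 := (measure_closedBall_pos volume y hρ).ne'
    have hBt : volume (closedBall y ρ) ≠ ⊤ := measure_closedBall_lt_top.ne
    -- main estimate for each ε ∈ (0,1)
    have main : ∀ ε : ℝ, 0 < ε → ε < 1 →
        volume (closedBall y ρ ∩ S) +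
            ENNReal.ofReal (((1 - ε) / ((3 + 2 * ε) * M)) ^ d) * volume (closedBall y ρ) ≤
          volume (closedBall y ρ) := by
      intro ε hε0 hε1
      set s := ρ * (1 - ε) with hs_def
      have hs : 0 < s := mul_pos hρ (by linarith)
      set β := ρ * ε / 2 with hβ_def
      have hβ : 0 < β := by positivity
      have h3ε : (0 : ℝ) < 3 + 2 * ε := by linarith
      set t : Set ℕ :=
        {i | N ≤ i ∧ r i ≤ β ∧ (closedBall (x i) (r i) ∩ closedBall y s).Nonempty} with ht_def
      -- each ball in t is inside closedBall y ρ
      have hsub : ∀ i ∈ t, closedBall (x i) (r i) ⊆ closedBall y ρ := by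
        rintro i ⟨hiN, hirβ, z, hz1, hz2⟩ w hw
        have h4 : dist w y ≤ dist w (x i) + dist (x i) z + dist z y := dist_triangle4 w (x i) z y
        have h1 : dist w (x i) ≤ r i := hw
        have h2 : dist (x i) z ≤ r i := by rw [dist_comm]; exact hz1
        have h3 : dist z y ≤ s := hz2
        have hsρ : 2 * β + s = ρ := by rw [hβ_def, hs_def]; ring
        exact mem_closedBall.2 (by linarith)
      -- a.e. coverage of closedBall y s by the family t
      have hcov : ∀ᵐ α : EuclideanSpace ℝ (Fin d),
          α ∈ closedBall y s → α ∈ ⋃ i ∈ t, closedBall (x i) (r i) := by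
        filter_upwards [hae] with α hα hαs
        obtain ⟨n, hn⟩ := (hshrink y s hs β hβ).bddAbove
        obtain ⟨i, hiN, hi⟩ := hα (max N (n + 1))
        have hirβ : r i ≤ β := by
          by_contra hc
          have : i ∈ {i : ℕ | (closedBall (x i) (r i) ∩ closedBall y s).Nonempty ∧ β < r i} :=
            ⟨⟨α, hi, hαs⟩, lt_of_not_ge hc⟩
          have h5 := hn this
          have h6 : n + 1 ≤ i := le_trans (le_max_right _ _) hiN
          omega
        have hit : i ∈ t :=
          ⟨le_trans (le_max_left _ _) hiN, hirβ, ⟨α, hi, hαs⟩⟩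
        exact mem_biUnion hit hi
      -- Vitali enlargement
      obtain ⟨u, hut, hdisj, hcov2⟩ :=
        Vitali.exists_disjoint_subfamily_covering_enlargement
          (fun i => closedBall (x i) (r i)) t r (1 + ε) (by linarith)
          (fun a _ => (hr a).le) β (fun a ha => ha.2.1)
          (fun a _ => ⟨x a, mem_closedBall_self (hr a).le⟩)
      have henl : ∀ a ∈ t, ∃ b ∈ u, closedBall (x a) (r a) ⊆
          closedBall (x b) ((3 + 2 * ε) * r b) := by
        intro a ha
        obtain ⟨b, hbu, ⟨z, hz1, hz2⟩, hδ⟩ := hcov2 a ha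
        refine ⟨b, hbu, fun w hw => ?_⟩
        have h4 : dist w (x b) ≤ dist w (x a) + dist (x a) z + dist z (x b) :=
          dist_triangle4 w (x a) z (x b)
        have h1 : dist w (x a) ≤ r a := hw
        have h2 : dist (x a) z ≤ r a := by rw [dist_comm]; exact hz1
        have h3 : dist z (x b) ≤ r b := hz2
        have hb0 : 0 ≤ r b := (hr b).le
        exact mem_closedBall.2 (by nlinarith)
      -- chain A : volume comparison
      have hA : ENNReal.ofReal (s ^ d) * κ ≤
          ∑' b : u, ENNReal.ofReal (((3 + 2 * ε) * r b) ^ d) * κ := by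
        calc ENNReal.ofReal (s ^ d) * κ = volume (closedBall y s) := (hvol y s hs.le).symm
          _ ≤ volume (⋃ i ∈ t, closedBall (x i) (r i)) := measure_mono_ae hcov
          _ ≤ volume (⋃ b ∈ u, closedBall (x b) ((3 + 2 * ε) * r b)) := by
              refine measure_mono (iUnion₂_subset fun a ha => ?_)
              obtain ⟨b, hbu, hsub'⟩ := henl a ha
              exact fun w hw => mem_biUnion hbu (hsub' hw)
          _ ≤ ∑' b : u, volume (closedBall (x b) ((3 + 2 * ε) * r b)) :=
              measure_biUnion_le volume u.to_countable _
          _ = ∑' b : u, ENNReal.ofReal (((3 + 2 * ε) * r b) ^ d) * κ :=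
              tsum_congr fun b => hvol _ _ (mul_nonneg h3ε.le (hr _).le)
      -- pointwise identity for the small balls
      set c : ℝ≥0∞ := ENNReal.ofReal ((1 / ((3 + 2 * ε) * (M : ℝ))) ^ d) with hc_def
      have hptwise : ∀ b : ℕ, volume (closedBall (x b) (r b / M)) =
          c * (ENNReal.ofReal (((3 + 2 * ε) * r b) ^ d) * κ) := by
        intro b
        rw [hvol _ _ (div_nonneg (hr b).le hMR.le), ← mul_assoc, hc_def,
          ← ENNReal.ofReal_mul (pow_nonneg (one_div_nonneg.2 (mul_nonneg h3ε.le hMR.le)) d)]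
        congr 2
        rw [← mul_pow]
        congr 1
        field_simp
      -- lower bound on the total small-ball volume
      have hsmall_sum : c * (ENNReal.ofReal (s ^ d) * κ) ≤
          ∑' b : u, volume (closedBall (x ↑b) (r ↑b / M)) := by
        calc c * (ENNReal.ofReal (s ^ d) * κ)
            ≤ c * ∑' b : u, ENNReal.ofReal (((3 + 2 * ε) * r b) ^ d) * κ :=
              by gcongr
          _ = ∑' b : u, c * (ENNReal.ofReal (((3 + 2 * ε) * r b) ^ d) * κ) :=
              (ENNReal.tsum_mul_left).symm
          _ = ∑' b : u, volume (closedBall (x ↑b) (r ↑b / M)) :=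
              tsum_congr fun b => (hptwise b).symm
      have hc_eq : c * (ENNReal.ofReal (s ^ d) * κ) =
          ENNReal.ofReal (((1 - ε) / ((3 + 2 * ε) * M)) ^ d) * volume (closedBall y ρ) := by
        rw [hvol y ρ hρ.le, ← mul_assoc, ← mul_assoc, hc_def,
          ← ENNReal.ofReal_mul (pow_nonneg (one_div_nonneg.2 (mul_nonneg h3ε.le hMR.le)) d),
          ← ENNReal.ofReal_mul (pow_nonneg (div_nonneg (by linarith) (mul_nonneg h3ε.le hMR.le)) d)]
        congr 2
        rw [← mul_pow, ← mul_pow]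
        congr 1
        rw [hs_def]
        field_simp
      -- disjointness and the final inequality
      have hPD : u.PairwiseDisjoint (fun b => closedBall (x b) (r b / M)) :=
        hdisj.mono fun b => closedBall_subset_closedBall (div_le_self (hr b).le hM1R)
      have hUmeas : MeasurableSet (⋃ b ∈ u, closedBall (x b) (r b / M)) :=
        MeasurableSet.biUnion u.to_countable fun b _ => measurableSet_closedBall
      have hsum_eq : volume (⋃ b ∈ u, closedBall (x b) (r b / M)) =
          ∑' b : u, volume (closedBall (x ↑b) (r ↑b / M)) :=
        measure_biUnion u.to_countable hPD fun b _ => measurableSet_closedBall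
      have hUsub : (⋃ b ∈ u, closedBall (x b) (r b / M)) ⊆ closedBall y ρ :=
        iUnion₂_subset fun b hbu =>
          (closedBall_subset_closedBall (div_le_self (hr b).le hM1R)).trans
            (hsub b (hut hbu))
      have hdisjS : Disjoint (closedBall y ρ ∩ S) (⋃ b ∈ u, closedBall (x b) (r b / M)) := by
        rw [Set.disjoint_left]
        rintro α ⟨hαρ, hαS⟩ hαU
        obtain ⟨b, hbu, hb⟩ := mem_iUnion₂.1 hαU
        exact hαS b (hut hbu).1 hb
      calc volume (closedBall y ρ ∩ S) +
            ENNReal.ofReal (((1 - ε) / ((3 + 2 * ε) * M)) ^ d) * volume (closedBall y ρ)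
          ≤ volume (closedBall y ρ ∩ S) +
              volume (⋃ b ∈ u, closedBall (x b) (r b / M)) := by
            refine add_le_add le_rfl ?_
            rw [hsum_eq, ← hc_eq]
            exact hsmall_sum
        _ = volume ((closedBall y ρ ∩ S) ∪ ⋃ b ∈ u, closedBall (x b) (r b / M)) :=
            (measure_union hdisjS hUmeas).symm
        _ ≤ volume (closedBall y ρ) :=
            measure_mono (union_subset inter_subset_left hUsub)
    -- take ε → 0
    set L : ℝ≥0∞ := (1 / (3 * (M : ℝ≥0∞))) ^ d with hL_def
    have hL : L = ENNReal.ofReal ((1 / (3 * (M : ℝ))) ^ d) := by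
      rw [hL_def, ENNReal.ofReal_pow (by positivity)]
      congr 1
      rw [ENNReal.ofReal_div_of_pos (by positivity), ENNReal.ofReal_one,
        ENNReal.ofReal_mul (by norm_num), ENNReal.ofReal_ofNat, ENNReal.ofReal_natCast]
    set q := volume (closedBall y ρ ∩ S) / volume (closedBall y ρ) with hq_def
    have hqn : ∀ n : ℕ,
        q + ENNReal.ofReal (((1 - ((n : ℝ) + 2)⁻¹) /
          ((3 + 2 * ((n : ℝ) + 2)⁻¹) * M)) ^ d) ≤ 1 := by
      intro n
      have hp0 : (0 : ℝ) < ((n : ℝ) + 2)⁻¹ := by positivity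
      have hp1 : ((n : ℝ) + 2)⁻¹ < 1 := by
        have hmul : ((n : ℝ) + 2)⁻¹ * ((n : ℝ) + 2) = 1 := inv_mul_cancel₀ (by positivity)
        nlinarith [Nat.cast_nonneg (α := ℝ) n]
      have h1 := main _ hp0 hp1
      have h2 : (volume (closedBall y ρ ∩ S) +
          ENNReal.ofReal (((1 - ((n : ℝ) + 2)⁻¹) /
            ((3 + 2 * ((n : ℝ) + 2)⁻¹) * M)) ^ d) * volume (closedBall y ρ)) /
          volume (closedBall y ρ) ≤ 1 :=
        ENNReal.div_le_of_le_mul (h1.trans_eq (one_mul _).symm)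
      rwa [ENNReal.add_div, mul_div_assoc, ENNReal.div_self hB0 hBt, mul_one] at h2
    have hεt : Tendsto (fun n : ℕ => ((n : ℝ) + 2)⁻¹) atTop (𝓝 0) :=
      tendsto_inv_atTop_zero.comp (tendsto_atTop_add_const_right _ _ tendsto_natCast_atTop_atTop)
    have hten : Tendsto (fun n : ℕ => ENNReal.ofReal (((1 - ((n : ℝ) + 2)⁻¹) /
        ((3 + 2 * ((n : ℝ) + 2)⁻¹) * M)) ^ d)) atTop (𝓝 L) := by
      rw [hL]
      refine (ENNReal.continuous_ofReal.tendsto _).comp ?_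
      have h1 : Tendsto (fun n : ℕ => (1 - ((n : ℝ) + 2)⁻¹)) atTop (𝓝 1) := by
        simpa using tendsto_const_nhds.sub hεt
      have h2 : Tendsto (fun n : ℕ => ((3 + 2 * ((n : ℝ) + 2)⁻¹) * (M : ℝ))) atTop
          (𝓝 (3 * (M : ℝ))) := by
        have h3 : Tendsto (fun n : ℕ => (3 + 2 * ((n : ℝ) + 2)⁻¹)) atTop (𝓝 (3 : ℝ)) := by
          simpa using (tendsto_const_nhds (x := (3 : ℝ))).add (hεt.const_mul 2)
        simpa using h3.mul (tendsto_const_nhds (x := (M : ℝ)))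
      exact (h1.div h2 (by positivity)).pow d
    have hQL : q + L ≤ 1 :=
      le_of_tendsto (Tendsto.const_add q hten) (Filter.Eventually.of_forall hqn)
    have hLt : L ≠ ⊤ := by rw [hL]; exact ENNReal.ofReal_ne_top
    exact (ENNReal.cancel_of_ne hLt).le_tsub_of_add_le_right hQL
  have hev : ∀ᶠ ρ in nhdsWithin (0 : ℝ) (Set.Ioi 0),
      volume (closedBall y ρ ∩ S) / volume (closedBall y ρ) ≤
        1 - (1 / (3 * (M : ℝ≥0∞))) ^ d := by
    filter_upwards [self_mem_nhdsWithin] with ρ hρ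
    exact key ρ hρ
  exact limsup_le_of_le (by isBoundedDefault) hev
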